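/- Every real trifocal essential matrix is an essential matrix: if a real 3×3 matrix S satisfies det S = 0 and trace(S Sᵀ)² − 2 trace((S Sᵀ)²) = 0, then S = [t]ₓ R for some t ∈ ℝ³ and R ∈ SO(3). -/

import Mathlib

open Matrix

/-- The skew-symmetric matrix `[t]ₓ` of a 3-vector. -/
def skew {R : Type*} [CommRing R] (t : Fin 3 → R) : Matrix (Fin 3) (Fin 3) R :=
  !![0, -t 2, t 1; t 2, 0, -t 0; -t 1, t 0, 0]

abbrev M3 := Matrix (Fin 3) (Fin 3) ℝ

lemma hmulvv (A : M3) (x y : Fin 3 → ℝ) : A * vecMulVec x y = vecMulVec (A *ᵥ x) y := by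
  ext i j; simp [mul_apply, vecMulVec_apply, mulVec, dotProduct, Finset.sum_mul, mul_assoc]

lemma hvvmul (x y : Fin 3 → ℝ) (A : M3) : vecMulVec x y * A = vecMulVec x (y ᵥ* A) := by
  ext i j; simp [mul_apply, vecMulVec_apply, vecMul, dotProduct, Finset.mul_sum, mul_assoc]

lemma hvvvv (x y z w : Fin 3 → ℝ) :
    vecMulVec x y * vecMulVec z w = (y ⬝ᵥ z) • vecMulVec x w := by
  ext i j; simp [mul_apply, vecMulVec_apply, dotProduct, Finset.sum_mul, Finset.mul_sum]
  ring_nf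
  exact Finset.sum_congr rfl fun k _ => by ring

lemma hvvT (x y : Fin 3 → ℝ) : (vecMulVec x y)ᵀ = vecMulVec y x := by
  ext i j; simp [vecMulVec_apply, mul_comm]

lemma hvvtrace (x y : Fin 3 → ℝ) : (vecMulVec x y).trace = x ⬝ᵥ y := by
  simp [trace, vecMulVec_apply, dotProduct, diag]

lemma hvvmulVec (x y z : Fin 3 → ℝ) : (vecMulVec x y) *ᵥ z = (y ⬝ᵥ z) • x := by
  ext i; simp [mulVec, vecMulVec_apply, dotProduct, Finset.mul_sum, Finset.sum_mul, mul_assoc]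
  ring_nf

lemma htrzero (N : M3) (h : (N * Nᵀ).trace = 0) : N = 0 := by
  have h' : ∑ i : Fin 3, ∑ j : Fin 3, N i j * N i j = 0 := by
    simpa [trace, mul_apply, diag] using h
  ext i j
  have := (Finset.sum_eq_zero_iff_of_nonneg (fun i _ => Finset.sum_nonneg
    (fun j _ => mul_self_nonneg (N i j)))).mp h' i (Finset.mem_univ i)
  have := (Finset.sum_eq_zero_iff_of_nonneg (fun j _ => mul_self_nonneg (N i j))).mp this j
    (Finset.mem_univ j)
  simpa [mul_self_eq_zero] using this

lemma hvvsmul (a : ℝ) (v : Fin 3 → ℝ) :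
    vecMulVec (a • v) (a • v) = (a * a) • vecMulVec v v := by
  ext i j; simp [vecMulVec_apply]; ring

lemma proj_rank_one (Q : M3) (hs : Qᵀ = Q) (hi : Q * Q = Q) (ht : Q.trace = 1) :
    ∃ x : Fin 3 → ℝ, x ⬝ᵥ x = 1 ∧ Q = vecMulVec x x := by
  obtain ⟨i, -, hne⟩ : ∃ i ∈ Finset.univ, Q i i ≠ 0 := by
    by_contra h
    push_neg at h
    have h0 : Q.trace = 0 := by
      simp only [trace, diag]
      exact Finset.sum_eq_zero fun i _ => h i (Finset.mem_univ i)
    rw [ht] at h0; norm_num at h0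
  have hsym : ∀ a b, Q a b = Q b a := fun a b => by
    have := congrFun (congrFun hs b) a
    simpa [transpose_apply] using this
  set v : Fin 3 → ℝ := fun j => Q j i with hv
  have hvdot : v ⬝ᵥ v = Q i i := by
    have h1 := congrFun (congrFun hi i) i
    simp only [mul_apply] at h1
    rw [dotProduct, ← h1]
    exact Finset.sum_congr rfl fun k _ => by rw [hsym i k]
  have hQii_pos : 0 < Q i i := by
    have h0 : 0 ≤ Q i i := by
      rw [← hvdot]; exact Finset.sum_nonneg fun k _ => mul_self_nonneg _
    exact lt_of_le_of_ne h0 (Ne.symm hne)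
  have hQv : Q *ᵥ v = v := by
    ext j
    have := congrFun (congrFun hi j) i
    simp only [mul_apply] at this
    simpa [mulVec, dotProduct, hv] using this
  set c : ℝ := (Q i i)⁻¹ with hc
  set V : M3 := vecMulVec v v with hV
  have hQV : Q * V = V := by rw [hV, hmulvv, hQv]
  have hVQ : V * Q = V := by
    have h2 : (V * Q)ᵀ = V := by rw [transpose_mul, hs, hV, hvvT, ← hV, hQV]
    calc V * Q = ((V * Q)ᵀ)ᵀ := by rw [transpose_transpose]
    _ = Vᵀ := by rw [h2]
    _ = V := by rw [hV, hvvT]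
  have hVV : V * V = Q i i • V := by rw [hV, hvvvv, hvdot]
  set D : M3 := Q - c • V with hD
  have hDT : Dᵀ = D := by rw [hD, transpose_sub, hs, transpose_smul, hV, hvvT]
  have hDD : D * D = D := by
    rw [hD, sub_mul, mul_sub, mul_sub, Matrix.smul_mul, Matrix.smul_mul, Matrix.mul_smul,
      Matrix.mul_smul, hi, hQV, hVQ, hVV, smul_smul, smul_smul]
    have h2 : c * c * Q i i = c := by rw [hc, mul_assoc, inv_mul_cancel₀ hne, mul_one]
    have h3 : c * (Q i i * c) = c := by rw [hc, mul_inv_cancel₀ hne, mul_one]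
    rw [h2]
    simp
  have hDtr : D.trace = 0 := by
    rw [hD, trace_sub, trace_smul, hV, hvvtrace, hvdot, ht, hc, smul_eq_mul,
      inv_mul_cancel₀ hne]
    ring
  have hD0 : D = 0 := by
    apply htrzero
    rw [hDT, hDD, hDtr]
  have hQeq : Q = c • V := by
    rw [hD] at hD0
    linear_combination (norm := abel) hD0
  have hrt : Real.sqrt (Q i i) * Real.sqrt (Q i i) = Q i i := Real.mul_self_sqrt hQii_pos.le
  have hrt0 : Real.sqrt (Q i i) ≠ 0 := by positivity
  refine ⟨(Real.sqrt (Q i i))⁻¹ • v, ?_, ?_⟩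
  · simp only [smul_dotProduct, dotProduct_smul, smul_eq_mul, hvdot]
    field_simp
    rw [Real.sq_sqrt hQii_pos.le]
  · have ha : (Real.sqrt (Q i i))⁻¹ * (Real.sqrt (Q i i))⁻¹ = c := by
      rw [hc, ← mul_inv, hrt]
    rw [hvvsmul, ← hV, ha, ← hQeq]

lemma skew_transpose (t : Fin 3 → ℝ) : (skew t)ᵀ = -skew t := by
  ext i j; fin_cases i <;> fin_cases j <;> simp [skew]

lemma skew_mul_transpose (t : Fin 3 → ℝ) :
    skew t * (skew t)ᵀ = (t ⬝ᵥ t) • 1 - vecMulVec t t := by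
  rw [skew_transpose]
  ext i j; fin_cases i <;> fin_cases j <;>
    simp [skew, mul_apply, Fin.sum_univ_three, dotProduct, vecMulVec_apply, one_apply] <;> ring

lemma skew_mulVec_self (t : Fin 3 → ℝ) : skew t *ᵥ t = 0 := by
  ext i; fin_cases i <;> simp [skew, mulVec, dotProduct, Fin.sum_univ_three] <;> ring

-- Cayley Hamilton for 3x3

lemma ch3 (A : M3) :
    A * A * A - A.trace • (A * A) + (((A.trace ^ 2 - (A * A).trace) / 2)) • A
      - A.det • (1 : M3) = 0 := by
  ext i j
  fin_cases i <;> fin_cases j <;>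
    simp [mul_apply, Fin.sum_univ_three, trace, diag, det_fin_three, one_apply] <;> ring

lemma det_one_add_smul_vvT (c : ℝ) (x y : Fin 3 → ℝ) :
    ((1 : M3) + c • vecMulVec x y).det = 1 + c * (x ⬝ᵥ y) := by
  simp [det_fin_three, vecMulVec_apply, one_apply, dotProduct, Fin.sum_univ_three]
  ring

lemma vv_zero_left (y : Fin 3 → ℝ) : vecMulVec (0 : Fin 3 → ℝ) y = 0 := by
  ext i j; simp [vecMulVec_apply]

lemma vv_zero_right (x : Fin 3 → ℝ) : vecMulVec x (0 : Fin 3 → ℝ) = 0 := by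
  ext i j; simp [vecMulVec_apply]

theorem stmt_9 (S : Matrix (Fin 3) (Fin 3) ℝ)
    (hdet : S.det = 0)
    (htr : (S * Sᵀ).trace ^ 2 - 2 * ((S * Sᵀ) * (S * Sᵀ)).trace = 0) :
    ∃ (t : Fin 3 → ℝ) (R : Matrix (Fin 3) (Fin 3) ℝ),
      R * Rᵀ = 1 ∧ R.det = 1 ∧ S = skew t * R := by
  set M : M3 := S * Sᵀ with hMdef
  set τ : ℝ := M.trace / 2 with hτdef
  have hMT : Mᵀ = M := by rw [hMdef, transpose_mul, transpose_transpose]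
  have hMtr : M.trace = 2 * τ := by rw [hτdef]; ring
  have hMdet : M.det = 0 := by rw [hMdef, det_mul, hdet, zero_mul]
  have hM2tr : (M * M).trace = 2 * τ ^ 2 := by
    have h1 : (2 * τ) ^ 2 - 2 * (M * M).trace = 0 := by rw [← hMtr]; exact htr
    nlinarith [h1]
  -- Cayley-Hamilton consequence
  have hM3 : M * M * M = (2 * τ) • (M * M) - (τ * τ) • M := by
    have h := ch3 M
    rw [hMtr, hM2tr, hMdet] at h
    have hco : ((2 * τ) ^ 2 - 2 * τ ^ 2) / 2 = τ * τ := by ring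
    rw [hco, zero_smul, sub_zero] at h
    linear_combination (norm := module) h
  have hM4 : M * M * (M * M) = (3 * (τ * τ)) • (M * M) - (2 * (τ * τ * τ)) • M := by
    rw [← mul_assoc, hM3, sub_mul, Matrix.smul_mul, Matrix.smul_mul, hM3]
    module
  have hMM : M * M = τ • M := by
    have e1 : M * M * (τ • M) = τ • (M * M * M) := by rw [Matrix.mul_smul]
    have e2 : (τ • M) * (M * M) = τ • (M * M * M) := by rw [Matrix.smul_mul, ← mul_assoc]
    have e3 : (τ • M) * (τ • M) = (τ * τ) • (M * M) := by
      rw [Matrix.smul_mul, Matrix.mul_smul, smul_smul]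
    set N : M3 := M * M - τ • M with hN
    have hNT : Nᵀ = N := by
      rw [hN, transpose_sub, transpose_mul, hMT, transpose_smul, hMT]
    have hNN : N * N = 0 := by
      have expand : N * N = M * M * (M * M) - τ • (M * M * M) - τ • (M * M * M)
          + (τ * τ) • (M * M) := by
        rw [hN, sub_mul, mul_sub, mul_sub, e1, e2, e3]; abel
      rw [expand, hM3, hM4]
      module
    have hN0 : N = 0 := htrzero N (by rw [hNT, hNN, trace_zero])
    rw [hN] at hN0
    linear_combination (norm := module) hN0
  -- nonnegativity of τ
  have htrnn : 0 ≤ M.trace := by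
    have h1 : M.trace = ∑ i : Fin 3, ∑ j : Fin 3, S i j * S i j := by
      simp [hMdef, trace, diag, mul_apply]
    rw [h1]
    exact Finset.sum_nonneg fun i _ => Finset.sum_nonneg fun j _ => mul_self_nonneg _
  have hτnn : 0 ≤ τ := by rw [hτdef]; positivity
  rcases eq_or_lt_of_le hτnn with hτ0 | hτpos
  · -- τ = 0, so S = 0
    have hS0 : S = 0 := htrzero S (by rw [← hMdef]; nlinarith [hMtr, hτ0])
    refine ⟨0, 1, by simp, by simp, ?_⟩
    have hsk0 : skew (0 : Fin 3 → ℝ) = 0 := by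
      ext i j
      fin_cases i <;> fin_cases j <;> simp [skew] <;> rfl
    rw [hS0, hsk0, zero_mul]
  · have hτne : τ ≠ 0 := ne_of_gt hτpos
    -- projection Q
    set Q : M3 := 1 - τ⁻¹ • M with hQdef
    have hQs : Qᵀ = Q := by rw [hQdef, transpose_sub, transpose_one, transpose_smul, hMT]
    have hQQ : Q * Q = Q := by
      have e3 : (τ⁻¹ • M) * (τ⁻¹ • M) = τ⁻¹ • M := by
        rw [Matrix.smul_mul, Matrix.mul_smul, smul_smul, hMM, smul_smul]
        rw [show τ⁻¹ * τ⁻¹ * τ = τ⁻¹ from by field_simp]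
      rw [hQdef, sub_mul, mul_sub, mul_sub, e3]
      simp only [one_mul, mul_one]
      abel
    have hQtr : Q.trace = 1 := by
      rw [hQdef, trace_sub, trace_smul, hMtr, trace_one]
      simp only [smul_eq_mul, Fintype.card_fin]
      field_simp
      ring
    obtain ⟨u, hu1, hQu⟩ := proj_rank_one Q hQs hQQ hQtr
    set U : M3 := vecMulVec u u with hUdef
    have hQU : τ⁻¹ • M = 1 - U := by
      have h1 : (1 : M3) - τ⁻¹ • M = U := by rw [← hQdef, hQu, hUdef]
      rw [← h1, sub_sub_cancel]
    have hMeq : M = τ • (1 : M3) - τ • U := by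
      calc M = τ • (τ⁻¹ • M) := by rw [smul_smul, mul_inv_cancel₀ hτne, one_smul]
      _ = τ • ((1 : M3) - U) := by rw [hQU]
      _ = τ • (1 : M3) - τ • U := by rw [smul_sub]
    -- the vector t
    set st : ℝ := Real.sqrt τ with hstdef
    have hst2 : st * st = τ := Real.mul_self_sqrt hτpos.le
    have hstne : st ≠ 0 := by rw [hstdef]; positivity
    set t : Fin 3 → ℝ := st • u with htdef
    have htt : t ⬝ᵥ t = τ := by
      rw [htdef]
      simp only [smul_dotProduct, dotProduct_smul, smul_eq_mul, hu1]
      rw [← hst2]; ring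
    have hvvt : vecMulVec t t = τ • U := by rw [htdef, hvvsmul, hst2, hUdef]
    set A : M3 := skew t with hAdef
    have hAT : Aᵀ = -A := by rw [hAdef, skew_transpose]
    have hAAT : A * Aᵀ = M := by
      rw [hAdef, skew_mul_transpose, htt, hvvt, hMeq]
    have hAu : A *ᵥ u = 0 := by
      have h1 : A *ᵥ t = 0 := by rw [hAdef]; exact skew_mulVec_self t
      rw [htdef, mulVec_smul] at h1
      rcases smul_eq_zero.mp h1 with h | h
      · exact absurd h hstne
      · exact h
    have hAU : A * U = 0 := by rw [hUdef, hmulvv, hAu, vv_zero_left]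
    have hUA : U * A = 0 := by
      have h1 : (U * A)ᵀ = 0 := by
        rw [transpose_mul, hAT, hUdef, hvvT, ← hUdef, Matrix.neg_mul, hAU, neg_zero]
      calc U * A = ((U * A)ᵀ)ᵀ := (transpose_transpose _).symm
      _ = 0 := by rw [h1, transpose_zero]
    have hAA : A * A = -M := by
      have h1 : A * Aᵀ = -(A * A) := by rw [hAT, Matrix.mul_neg]
      rw [h1] at hAAT
      exact neg_eq_iff_eq_neg.mp hAAT
    -- u annihilates S from the left
    have hMu : M *ᵥ u = 0 := by
      rw [hMeq, sub_mulVec, smul_mulVec, smul_mulVec, one_mulVec, hUdef,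
        hvvmulVec, hu1, one_smul, sub_self]
    have huS : u ᵥ* S = 0 := by
      have h2 : u ⬝ᵥ (M *ᵥ u) = 0 := by rw [hMu, dotProduct_zero]
      rw [hMdef, ← mulVec_mulVec, dotProduct_mulVec, mulVec_transpose] at h2
      exact dotProduct_self_eq_zero.mp h2
    have hUS : U * S = 0 := by rw [hUdef, hvvmul, huS, vv_zero_right]
    have hMS : M * S = τ • S := by
      rw [hMeq, sub_mul, Matrix.smul_mul, Matrix.smul_mul, one_mul, hUS, smul_zero, sub_zero]
    -- the matrix B
    set B : M3 := (-τ⁻¹) • (A * S) with hBdef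
    have hAB : A * B = S := by
      rw [hBdef, Matrix.mul_smul, ← mul_assoc, hAA, Matrix.neg_mul, hMS]
      rw [smul_neg, ← neg_smul, neg_neg, smul_smul]
      have h1 : τ⁻¹ * τ = 1 := by field_simp
      rw [h1, one_smul]
    have hBT : Bᵀ = τ⁻¹ • (Sᵀ * A) := by
      rw [hBdef, transpose_smul, transpose_mul, hAT, Matrix.mul_neg, smul_neg, ← neg_smul,
        neg_neg]
    have hAM : A * M = τ • A := by
      rw [hMeq, mul_sub, Matrix.mul_smul, Matrix.mul_smul, mul_one, hAU, smul_zero, sub_zero]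
    have hASSA : A * S * (Sᵀ * A) = -(τ • M) := by
      calc A * S * (Sᵀ * A) = A * S * Sᵀ * A := by rw [← mul_assoc]
      _ = A * (S * Sᵀ) * A := by rw [mul_assoc A S Sᵀ]
      _ = A * M * A := by rw [← hMdef]
      _ = (τ • A) * A := by rw [hAM]
      _ = τ • (A * A) := by rw [Matrix.smul_mul]
      _ = τ • (-M) := by rw [hAA]
      _ = -(τ • M) := by rw [smul_neg]
    have hBBT : B * Bᵀ = 1 - U := by
      rw [hBT, hBdef, Matrix.smul_mul, Matrix.mul_smul, smul_smul, hASSA, smul_neg, smul_smul]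
      have h1 : -τ⁻¹ * τ⁻¹ * τ = -τ⁻¹ := by field_simp
      rw [h1, neg_smul, neg_neg, hQU]
    have hUB : U * B = 0 := by
      rw [hBdef, Matrix.mul_smul, ← mul_assoc, hUA, Matrix.zero_mul, smul_zero]
    have hBTU : Bᵀ * U = 0 := by
      have h1 : (Bᵀ * U)ᵀ = 0 := by
        rw [transpose_mul, transpose_transpose, hUdef, hvvT, ← hUdef, hUB]
      calc Bᵀ * U = ((Bᵀ * U)ᵀ)ᵀ := (transpose_transpose _).symm
      _ = 0 := by rw [h1, transpose_zero]
    have hUtr : U.trace = 1 := by rw [hUdef, hvvtrace, hu1]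
    -- second projection C
    set C : M3 := 1 - Bᵀ * B with hCdef
    have hBTBs : (Bᵀ * B)ᵀ = Bᵀ * B := by rw [transpose_mul, transpose_transpose]
    have hBTB2 : (Bᵀ * B) * (Bᵀ * B) = Bᵀ * B := by
      calc (Bᵀ * B) * (Bᵀ * B) = Bᵀ * B * Bᵀ * B := by rw [← mul_assoc]
      _ = Bᵀ * (B * Bᵀ) * B := by rw [mul_assoc Bᵀ B Bᵀ]
      _ = Bᵀ * (1 - U) * B := by rw [hBBT]
      _ = (Bᵀ - Bᵀ * U) * B := by rw [mul_sub, mul_one]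
      _ = Bᵀ * B := by rw [hBTU, sub_zero]
    have hCs : Cᵀ = C := by rw [hCdef, transpose_sub, transpose_one, hBTBs]
    have hCi : C * C = C := by
      rw [hCdef, sub_mul, mul_sub, mul_sub, hBTB2]
      simp only [one_mul, mul_one]
      abel
    have hCtr : C.trace = 1 := by
      rw [hCdef, trace_sub, trace_one, trace_mul_comm, hBBT, trace_sub, trace_one, hUtr]
      simp
    obtain ⟨x, hx1, hCx⟩ := proj_rank_one C hCs hCi hCtr
    have hBTBeq : Bᵀ * B = 1 - C := by
      rw [hCdef]; abel
    have hBx : B *ᵥ x = 0 := by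
      have h1 : (Bᵀ * B) *ᵥ x = 0 := by
        rw [hBTBeq, sub_mulVec, one_mulVec, hCx, hvvmulVec, hx1, one_smul, sub_self]
      have h2 : (B *ᵥ x) ⬝ᵥ (B *ᵥ x) = 0 := by
        rw [dotProduct_mulVec, ← mulVec_transpose, mulVec_mulVec, h1, zero_dotProduct]
      exact dotProduct_self_eq_zero.mp h2
    have hBvvxu : B * vecMulVec x u = 0 := by rw [hmulvv, hBx, vv_zero_left]
    have hvvuxBT : vecMulVec u x * Bᵀ = 0 := by
      have h1 : (vecMulVec u x * Bᵀ)ᵀ = 0 := by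
        rw [transpose_mul, transpose_transpose, hvvT, hBvvxu]
      calc vecMulVec u x * Bᵀ = ((vecMulVec u x * Bᵀ)ᵀ)ᵀ := (transpose_transpose _).symm
      _ = 0 := by rw [h1, transpose_zero]
    -- candidate R0
    set R0 : M3 := B + vecMulVec u x with hR0def
    have hAR0 : A * R0 = S := by
      rw [hR0def, mul_add, hAB, hmulvv, hAu, vv_zero_left, add_zero]
    have hR0R0T : R0 * R0ᵀ = 1 := by
      rw [hR0def, transpose_add, hvvT, add_mul, mul_add, mul_add, hBBT, hBvvxu, hvvuxBT,
        hvvvv, hx1, one_smul, ← hUdef]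
      abel
    have hdet2 : R0.det * R0.det = 1 := by
      have h1 := congrArg Matrix.det hR0R0T
      rwa [det_mul, det_transpose, det_one] at h1
    rcases mul_self_eq_one_iff.mp hdet2 with h1 | h1
    · exact ⟨t, R0, hR0R0T, h1, by rw [← hAdef, ← hAR0]⟩
    · -- reflect
      set H : M3 := 1 + (-2 : ℝ) • vecMulVec x x with hHdef
      have hHdet : H.det = -1 := by rw [hHdef, det_one_add_smul_vvT, hx1]; norm_num
      have hHT : Hᵀ = H := by rw [hHdef, transpose_add, transpose_one, transpose_smul, hvvT]
      have hHH : H * H = 1 := by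
        have e3 : ((-2:ℝ) • vecMulVec x x) * ((-2:ℝ) • vecMulVec x x)
            = (4:ℝ) • vecMulVec x x := by
          rw [Matrix.smul_mul, Matrix.mul_smul, smul_smul, hvvvv, hx1, one_smul]
          norm_num
        rw [hHdef, add_mul, mul_add, mul_add, e3]
        simp only [one_mul, mul_one]
        module
      set R1 : M3 := B - vecMulVec u x with hR1def
      have hR0x : R0 *ᵥ x = u := by
        rw [hR0def, add_mulVec, hBx, hvvmulVec, hx1, one_smul, zero_add]
      have hR1eq : R1 = R0 * H := by
        rw [hHdef, mul_add, mul_one, Matrix.mul_smul, hmulvv, hR0x, hR1def, hR0def]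
        module
      have hdetR1 : R1.det = 1 := by rw [hR1eq, det_mul, hHdet, h1]; norm_num
      have hR1R1T : R1 * R1ᵀ = 1 := by
        rw [hR1eq, transpose_mul, hHT, mul_assoc, ← mul_assoc H H, hHH, one_mul, hR0R0T]
      have hAR1 : A * R1 = S := by
        rw [hR1def, mul_sub, hAB, hmulvv, hAu, vv_zero_left, sub_zero]
      exact ⟨t, R1, hR1R1T, hdetR1, by rw [← hAdef, ← hAR1]⟩
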